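/- There exists a complete lattice of infinite breadth whose interval topology is Hausdorff; namely, the lattice 2^ω of all functions ω → 2 with the pointwise order has infinite breadth and its interval topology is Hausdorff. -/
import Mathlib


open Set Topology

/-- The interval topology on a preorder: the topology whose closed sets are generated by
the subbasis of all principal down-sets `↓x = Iic x` and all principal up-sets `↑x = Ici x`,
i.e. the topology generated by the complements of these sets. -/
def intervalTopology (α : Type*) [Preorder α] : TopologicalSpace α :=
  TopologicalSpace.generateFrom {s | ∃ a : α, s = (Set.Ici a)ᶜ ∨ s = (Set.Iic a)ᶜ}

/-- A complete lattice `L` has breadth `≤ n` if for every finite subset `F` of `L` there is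
a subset `A ⊆ F` with at most `n` elements such that `inf A = inf F`. -/
def HasBreadthLE (L : Type*) [CompleteLattice L] (n : ℕ) : Prop :=
  ∀ F : Set L, F.Finite → ∃ A ⊆ F, A.ncard ≤ n ∧ sInf A = sInf F

lemma pi_sInf_apply (s : Set (ℕ → Bool)) (i : ℕ) : sInf s i = ⨅ f ∈ s, f i := by
  simp [sInf_apply, iInf_apply]; rw [iInf_subtype']

lemma breadth_aux : ∀ n : ℕ, 0 < n → ¬ HasBreadthLE (ℕ → Bool) n := by
  intro n _ h
  set f : Fin (n+1) → (ℕ → Bool) := fun i j => decide (j ≠ (i : ℕ)) with hf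
  have hinj : Function.Injective f := by
    intro i j hij
    have := congrFun hij (j : ℕ)
    simp [hf] at this
    exact Fin.ext this.symm
  obtain ⟨A, hAF, hcard, hinf⟩ := h (Set.range f) (Set.finite_range f)
  have hmiss : ∃ i, f i ∉ A := by
    by_contra hc
    push_neg at hc
    have : A = Set.range f := hAF.antisymm (Set.range_subset_iff.mpr hc)
    have hn : (Set.range f).ncard = n + 1 := by
      rw [← Nat.card_coe_set_eq, Nat.card_range_of_injective hinj,
        Nat.card_eq_fintype_card, Fintype.card_fin]
    rw [this, hn] at hcard
    omega
  obtain ⟨i, hi⟩ := hmiss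
  have h1 : sInf A (i : ℕ) = true := by
    rw [pi_sInf_apply]
    refine le_antisymm le_top (le_iInf₂ fun g hg => ?_)
    obtain ⟨j, rfl⟩ := hAF hg
    have hji : j ≠ i := fun e => hi (e ▸ hg)
    simp [hf, Fin.val_ne_of_ne hji, (Fin.val_ne_of_ne hji).symm]
  have h2 : sInf (Set.range f) (i : ℕ) = false := by
    have hle : sInf (Set.range f) ≤ f i := sInf_le ⟨i, rfl⟩
    have := hle (i : ℕ)
    exact le_bot_iff.mp (by simpa [hf] using this)
  rw [hinf, h2] at h1
  exact Bool.false_ne_true h1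

lemma t2_aux : @T2Space (ℕ → Bool) (intervalTopology (ℕ → Bool)) := by
  letI : TopologicalSpace (ℕ → Bool) := intervalTopology (ℕ → Bool)
  refine ⟨fun f g hfg => ?_⟩
  have : ∃ i, f i ≠ g i := by
    by_contra hc; push_neg at hc; exact hfg (funext hc)
  obtain ⟨i, hi⟩ := this
  -- open sets depending on coordinate i
  set δ : ℕ → Bool := fun j => decide (j = i) with hδ
  set c : ℕ → Bool := fun j => decide (j ≠ i) with hc
  have hδi : δ i = true := by simp [hδ]
  have hci : c i = false := by simp [hc]
  have hUopen : IsOpen ((Set.Ici δ)ᶜ) :=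
    TopologicalSpace.GenerateOpen.basic _ ⟨δ, Or.inl rfl⟩
  have hVopen : IsOpen ((Set.Iic c)ᶜ) :=
    TopologicalSpace.GenerateOpen.basic _ ⟨c, Or.inr rfl⟩
  have hU : ∀ h : ℕ → Bool, h ∈ (Set.Ici δ)ᶜ ↔ h i = false := by
    intro h
    constructor
    · intro hh
      by_contra hne
      have : h i = true := by cases hx : h i <;> simp_all
      exact hh (fun j => by by_cases hj : j = i <;> simp [hδ, hj, this, Bool.false_le])
    · intro hh hm
      have := hm i
      rw [hh, hδi] at this
      exact Bool.noConfusion (le_antisymm this (Bool.false_le true))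
  have hV : ∀ h : ℕ → Bool, h ∈ (Set.Iic c)ᶜ ↔ h i = true := by
    intro h
    constructor
    · intro hh
      by_contra hne
      have h0 : h i = false := by cases hx : h i <;> simp_all
      exact hh (fun j => by by_cases hj : j = i <;> simp [hc, hj, h0, Bool.le_true])
    · intro hh hm
      have := hm i
      rw [hh, hci] at this
      exact Bool.noConfusion (le_antisymm this (Bool.false_le true))
  have hdisj : Disjoint ((Set.Ici δ)ᶜ) ((Set.Iic c)ᶜ) := by
    rw [Set.disjoint_left]
    intro h h1 h2
    rw [hU] at h1; rw [hV] at h2; simp_all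
  cases hfi : f i
  · have hgi : g i = true := by cases hx : g i <;> simp_all
    exact ⟨(Set.Ici δ)ᶜ, (Set.Iic c)ᶜ, hUopen, hVopen, (hU f).mpr hfi, (hV g).mpr hgi, hdisj⟩
  · have hgi : g i = false := by cases hx : g i <;> simp_all
    exact ⟨(Set.Iic c)ᶜ, (Set.Ici δ)ᶜ, hVopen, hUopen, (hV f).mpr hfi, (hU g).mpr hgi, hdisj.symm⟩

/-- There is a complete lattice of infinite breadth whose interval topology is Hausdorff:
namely `2^ω`, the complete lattice of functions `ω → 2` with the pointwise order (where
`2 = {0 < 1}` is modelled by `Bool` with `false < true`), has infinite breadth and a Hausdorff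
interval topology. -/
theorem exists_complete_lattice_infinite_breadth_t2 :
    ((∀ n : ℕ, 0 < n → ¬ HasBreadthLE (ℕ → Bool) n) ∧
      @T2Space (ℕ → Bool) (intervalTopology (ℕ → Bool))) ∧
    ∃ (L : Type) (_ : CompleteLattice L),
      (∀ n : ℕ, 0 < n → ¬ HasBreadthLE L n) ∧ @T2Space L (intervalTopology L) := by
  exact ⟨⟨breadth_aux, t2_aux⟩, ⟨ℕ → Bool, inferInstance, breadth_aux, t2_aux⟩⟩
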